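/- Given maximal independent sets S₁ of the m₁×n grid graph and S₂ of the m₂×n grid graph, there exists a set T of vertices in the middle column strip such that S₁ ∪ T ∪ S₂' is a maximal independent set of the (m₁+m₂+1)×n grid graph, where S₂' is the translate of S₂ by m₁+1 in the first coordinate. Moreover, the map (S₁, S₂) ↦ the resulting MIS can be chosen injective. -/

import Mathlib

/-- The m×n grid graph on {0,...,m-1}×{0,...,n-1}: edges between points at distance 1. -/
def gridGraph (m n : ℕ) : SimpleGraph (Fin m × Fin n) :=
  SimpleGraph.fromRel (fun u v =>
    (u.1 = v.1 ∧ u.2.1 + 1 = v.2.1) ∨ (u.2 = v.2 ∧ u.1.1 + 1 = v.1.1))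

/-- S is a maximal independent set: independent, and every vertex outside S has a neighbor in S. -/
def IsMaxIndep {V : Type*} (G : SimpleGraph V) (S : Set V) : Prop :=
  (∀ u ∈ S, ∀ v ∈ S, ¬ G.Adj u v) ∧ ∀ v ∉ S, ∃ u ∈ S, G.Adj v u

/-- The number of maximal independent sets of G. -/
noncomputable def numMIS {V : Type*} (G : SimpleGraph V) : ℕ :=
  Nat.card {S : Set V // IsMaxIndep G S}

lemma grid_adj_iff {m n : ℕ} {u v : Fin m × Fin n} :
    (gridGraph m n).Adj u v ↔
      ((u.1.1 = v.1.1 ∧ (u.2.1 + 1 = v.2.1 ∨ v.2.1 + 1 = u.2.1)) ∨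
       (u.2.1 = v.2.1 ∧ (u.1.1 + 1 = v.1.1 ∨ v.1.1 + 1 = u.1.1))) := by
  simp only [gridGraph, SimpleGraph.fromRel_adj, ne_eq, Prod.ext_iff, Fin.ext_iff]
  omega

section Aux
variable (m₁ m₂ n : ℕ)

/-- Embedding of the top grid. -/
def emb1 (v : Fin m₁ × Fin n) : Fin (m₁ + m₂ + 1) × Fin n :=
  ((Fin.castLE (by linarith) v.1 : Fin (m₁ + m₂ + 1)), v.2)

/-- Embedding of the bottom grid. -/
def emb2 (v : Fin m₂ × Fin n) : Fin (m₁ + m₂ + 1) × Fin n :=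
  ((⟨m₁ + 1 + v.1.val, by have := v.1.isLt; linarith⟩ : Fin (m₁ + m₂ + 1)), v.2)

/-- Middle-row vertex in column j. -/
def midv (j : Fin n) : Fin (m₁ + m₂ + 1) × Fin n :=
  (⟨m₁, by omega⟩, j)

lemma mem_emb1_union {S₁ : Set (Fin m₁ × Fin n)} {S₂ : Set (Fin m₂ × Fin n)}
    {T : Set (Fin (m₁ + m₂ + 1) × Fin n)} (hT : ∀ v ∈ T, v.1.val = m₁)
    (u : Fin m₁ × Fin n) :
    emb1 m₁ m₂ n u ∈ (emb1 m₁ m₂ n '' S₁ ∪ T ∪ emb2 m₁ m₂ n '' S₂) ↔ u ∈ S₁ := by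
  constructor
  · rintro ((⟨w, hw, hwe⟩ | hmem) | ⟨w, hw, hwe⟩)
    · have : w = u := by
        have h1 := congrArg (fun x => (x.1.1, x.2)) hwe
        simp only [emb1, Fin.coe_castLE] at h1
        obtain ⟨h1, h2⟩ := Prod.mk.injEq _ _ _ _ ▸ h1
        exact Prod.ext (Fin.ext (by simpa using h1)) (by simpa using h2)
      exact this ▸ hw
    · have := hT _ hmem
      simp only [emb1, Fin.coe_castLE] at this
      have := u.1.isLt; omega
    · have h1 := congrArg (fun x => x.1.1) hwe
      simp only [emb1, emb2, Fin.coe_castLE] at h1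
      have := u.1.isLt; omega
  · intro hu; exact Or.inl (Or.inl ⟨u, hu, rfl⟩)

lemma mem_emb2_union {S₁ : Set (Fin m₁ × Fin n)} {S₂ : Set (Fin m₂ × Fin n)}
    {T : Set (Fin (m₁ + m₂ + 1) × Fin n)} (hT : ∀ v ∈ T, v.1.val = m₁)
    (u : Fin m₂ × Fin n) :
    emb2 m₁ m₂ n u ∈ (emb1 m₁ m₂ n '' S₁ ∪ T ∪ emb2 m₁ m₂ n '' S₂) ↔ u ∈ S₂ := by
  constructor
  · rintro ((⟨w, hw, hwe⟩ | hmem) | ⟨w, hw, hwe⟩)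
    · have h1 := congrArg (fun x => x.1.1) hwe
      simp only [emb1, emb2, Fin.coe_castLE] at h1
      have := w.1.isLt; omega
    · have := hT _ hmem
      simp only [emb2] at this
      omega
    · have : w = u := by
        have h1 := congrArg (fun x => x.1.1) hwe
        have h2 := congrArg (fun x => x.2) hwe
        simp only [emb2] at h1 h2
        exact Prod.ext (Fin.ext (by omega)) h2
      exact this ▸ hw
  · intro hu; exact Or.inr ⟨u, hu, rfl⟩

end Aux

lemma exists_T (m₁ m₂ n : ℕ) (hm₁ : 0 < m₁) (hm₂ : 0 < m₂)
    (S₁ : Set (Fin m₁ × Fin n)) (S₂ : Set (Fin m₂ × Fin n))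
    (h₁ : IsMaxIndep (gridGraph m₁ n) S₁) (h₂ : IsMaxIndep (gridGraph m₂ n) S₂) :
    ∃ T : Set (Fin (m₁ + m₂ + 1) × Fin n), (∀ v ∈ T, v.1.val = m₁) ∧
      IsMaxIndep (gridGraph (m₁ + m₂ + 1) n)
        (emb1 m₁ m₂ n '' S₁ ∪ T ∪ emb2 m₁ m₂ n '' S₂) := by
  classical
  set A : Set (Fin n) := {j | ((⟨m₁ - 1, by omega⟩, j) : Fin m₁ × Fin n) ∉ S₁ ∧
      ((⟨0, hm₂⟩, j) : Fin m₂ × Fin n) ∉ S₂} with hA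
  set C : Finset (Finset (Fin n)) := Finset.univ.powerset.filter
    (fun B => (↑B ⊆ A) ∧ ∀ i ∈ B, ∀ j ∈ B, i.1 + 1 ≠ j.1) with hC
  have hCne : C.Nonempty := ⟨∅, by simp [hC]⟩
  obtain ⟨B, hBC, hBmax⟩ := C.exists_maximal hCne
  simp only [hC, Finset.mem_filter, Finset.mem_powerset] at hBC
  obtain ⟨-, hBA, hBind⟩ := hBC
  -- domination property of B within A
  have hBdom : ∀ j ∈ A, j ∉ B → ∃ k ∈ B, j.1 + 1 = k.1 ∨ k.1 + 1 = j.1 := by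
    intro j hjA hjB
    by_contra hno
    push_neg at hno
    have : insert j B ∈ C := by
      simp only [hC, Finset.mem_filter, Finset.mem_powerset]
      refine ⟨Finset.subset_univ _, ?_, ?_⟩
      · intro x hx
        rcases Finset.mem_insert.mp hx with rfl | hx
        · exact hjA
        · exact hBA hx
      · intro i hi k hk
        rcases Finset.mem_insert.mp hi with hij | hi' <;>
          rcases Finset.mem_insert.mp hk with hkj | hk'
        · subst hij; subst hkj; omega
        · subst hij; exact (hno k hk').1
        · subst hkj; exact (hno i hi').2
        · exact hBind i hi' k hk'
    exact (Finset.ssubset_insert hjB).not_subset (hBmax this (Finset.ssubset_insert hjB).subset)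
  refine ⟨midv m₁ m₂ n '' ↑B, ?_, ?_, ?_⟩
  · rintro v ⟨j, -, rfl⟩; rfl
  · -- independence
    rintro u hu v hv hadj
    rw [grid_adj_iff] at hadj
    rcases hu with (⟨a, ha, rfl⟩ | ⟨j, hj, rfl⟩) | ⟨a, ha, rfl⟩ <;>
      rcases hv with (⟨b, hb, rfl⟩ | ⟨k, hk, rfl⟩) | ⟨b, hb, rfl⟩
    · -- both in emb1
      refine h₁.1 a ha b hb ?_
      rw [grid_adj_iff]
      simpa [emb1] using hadj
    · -- emb1 vs mid : b = (m₁-1, j) ∈ S₁ contradicts j ∈ A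
      simp only [emb1, midv, Fin.coe_castLE] at hadj
      have h1 : a.1.1 + 1 = m₁ := by have := a.1.isLt; omega
      have h2 : a.2 = k := by
        rcases hadj with ⟨h, _⟩ | ⟨h, _⟩
        · have := a.1.isLt; omega
        · exact Fin.ext h
      have : a = (⟨m₁ - 1, by omega⟩, k) :=
        Prod.ext (Fin.ext (show a.1.1 = m₁ - 1 by omega)) h2
      exact (hBA hk).1 (this ▸ ha)
    · -- emb1 vs emb2 : impossible
      simp only [emb1, emb2, Fin.coe_castLE] at hadj
      have := a.1.isLt; omega
    · -- mid vs emb1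
      simp only [emb1, midv, Fin.coe_castLE] at hadj
      have h2 : b.2 = j := by
        rcases hadj with ⟨h, _⟩ | ⟨h, _⟩
        · have := b.1.isLt; omega
        · exact (Fin.ext h.symm)
      have : b = (⟨m₁ - 1, by omega⟩, j) := by
        refine Prod.ext (Fin.ext (show b.1.1 = m₁ - 1 from ?_)) h2
        have := b.1.isLt; omega
      exact (hBA hj).1 (this ▸ hb)
    · -- mid vs mid
      simp only [midv] at hadj
      rcases hadj with ⟨_, h⟩ | ⟨h, _⟩
      · rcases h with h | h
        · exact hBind j hj k hk h
        · exact hBind k hk j hj h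
      · omega
    · -- mid vs emb2
      simp only [midv, emb2] at hadj
      have h2 : b.2 = j := by
        rcases hadj with ⟨h, _⟩ | ⟨h, _⟩
        · omega
        · exact (Fin.ext h.symm)
      have hb1 : b.1.1 = 0 := by
        rcases hadj with ⟨h, _⟩ | ⟨_, h⟩ <;> omega
      have : b = (⟨0, hm₂⟩, j) := Prod.ext (Fin.ext hb1) h2
      exact (hBA hj).2 (this ▸ hb)
    · -- emb2 vs emb1
      simp only [emb1, emb2, Fin.coe_castLE] at hadj
      have := b.1.isLt; omega
    · -- emb2 vs mid
      simp only [midv, emb2] at hadj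
      have h2 : a.2 = k := by
        rcases hadj with ⟨h, _⟩ | ⟨h, _⟩
        · omega
        · exact (Fin.ext h)
      have ha1 : a.1.1 = 0 := by
        rcases hadj with ⟨h, _⟩ | ⟨_, h⟩ <;> omega
      have : a = (⟨0, hm₂⟩, k) := Prod.ext (Fin.ext ha1) h2
      exact (hBA hk).2 (this ▸ ha)
    · -- both in emb2
      refine h₂.1 a ha b hb ?_
      rw [grid_adj_iff]
      simp only [emb2] at hadj ⊢
      omega
  · -- maximality
    intro v hv
    rcases lt_trichotomy v.1.1 m₁ with hlt | heq | hgt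
    · -- top part
      set u : Fin m₁ × Fin n := (⟨v.1.1, hlt⟩, v.2) with hu
      have hveq : emb1 m₁ m₂ n u = v := Prod.ext (Fin.ext rfl) rfl
      have huS : u ∉ S₁ := by
        intro h
        exact hv (hveq ▸ Or.inl (Or.inl ⟨u, h, rfl⟩))
      obtain ⟨w, hw, hadj⟩ := h₁.2 u huS
      refine ⟨emb1 m₁ m₂ n w, Or.inl (Or.inl ⟨w, hw, rfl⟩), ?_⟩
      rw [grid_adj_iff] at hadj ⊢
      rw [← hveq]
      simpa [emb1] using hadj
    · -- middle row
      have hveq : midv m₁ m₂ n v.2 = v := Prod.ext (Fin.ext heq.symm) rfl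
      have hjB : v.2 ∉ B := by
        intro h
        have hmem : midv m₁ m₂ n v.2 ∈
            (emb1 m₁ m₂ n '' S₁ ∪ midv m₁ m₂ n '' ↑B ∪ emb2 m₁ m₂ n '' S₂) :=
          Or.inl (Or.inr ⟨v.2, h, rfl⟩)
        exact hv (hveq ▸ hmem)
      by_cases hjA : v.2 ∈ A
      · obtain ⟨k, hk, hor⟩ := hBdom v.2 hjA hjB
        refine ⟨midv m₁ m₂ n k, Or.inl (Or.inr ⟨k, hk, rfl⟩), ?_⟩
        rw [grid_adj_iff]
        simp only [midv]
        omega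
      · simp only [hA, Set.mem_setOf_eq, not_and_or, not_not] at hjA
        rcases hjA with h | h
        · refine ⟨emb1 m₁ m₂ n (⟨m₁ - 1, by omega⟩, v.2), Or.inl (Or.inl ⟨_, h, rfl⟩), ?_⟩
          rw [grid_adj_iff]
          simp only [emb1, Fin.coe_castLE]
          refine Or.inr ⟨trivial, ?_⟩
          omega
        · refine ⟨emb2 m₁ m₂ n (⟨0, hm₂⟩, v.2), Or.inr ⟨_, h, rfl⟩, ?_⟩
          rw [grid_adj_iff]
          simp only [emb2]
          refine Or.inr ⟨trivial, ?_⟩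
          omega
    · -- bottom part
      have hlt2 : v.1.1 - (m₁ + 1) < m₂ := by have := v.1.isLt; omega
      set u : Fin m₂ × Fin n := (⟨v.1.1 - (m₁ + 1), hlt2⟩, v.2) with hu
      have hveq : emb2 m₁ m₂ n u = v := Prod.ext (Fin.ext (by simp [emb2, hu]; omega)) rfl
      have huS : u ∉ S₂ := by
        intro h
        exact hv (hveq ▸ Or.inr ⟨u, h, rfl⟩)
      obtain ⟨w, hw, hadj⟩ := h₂.2 u huS
      refine ⟨emb2 m₁ m₂ n w, Or.inr ⟨w, hw, rfl⟩, ?_⟩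
      rw [grid_adj_iff] at hadj ⊢
      rw [← hveq]
      simp only [emb2, hu] at hadj ⊢
      omega

theorem mis_adjoin (m₁ m₂ n : ℕ) (hm₁ : 0 < m₁) (hm₂ : 0 < m₂) (hn : 0 < n) :
    ∃ f : {S : Set (Fin m₁ × Fin n) // IsMaxIndep (gridGraph m₁ n) S} ×
          {S : Set (Fin m₂ × Fin n) // IsMaxIndep (gridGraph m₂ n) S} →
          {S : Set (Fin (m₁ + m₂ + 1) × Fin n) // IsMaxIndep (gridGraph (m₁ + m₂ + 1) n) S},
      Function.Injective f ∧
      ∀ p, ∃ T : Set (Fin (m₁ + m₂ + 1) × Fin n),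
        (∀ v ∈ T, v.1.val = m₁) ∧
        (f p).val =
          (fun v : Fin m₁ × Fin n => ((Fin.castLE (by omega) v.1 : Fin (m₁ + m₂ + 1)), v.2)) '' p.1.val
          ∪ T ∪
          (fun v : Fin m₂ × Fin n =>
            ((⟨m₁ + 1 + v.1.val, by have := v.1.isLt; omega⟩ : Fin (m₁ + m₂ + 1)), v.2)) '' p.2.val := by
  classical
  have hT := fun p : {S : Set (Fin m₁ × Fin n) // IsMaxIndep (gridGraph m₁ n) S} ×
          {S : Set (Fin m₂ × Fin n) // IsMaxIndep (gridGraph m₂ n) S} =>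
    exists_T m₁ m₂ n hm₁ hm₂ p.1.val p.2.val p.1.property p.2.property
  choose T hTrow hTmax using hT
  refine ⟨fun p => ⟨_, hTmax p⟩, ?_, ?_⟩
  · intro p q hpq
    have hval : (emb1 m₁ m₂ n '' p.1.val ∪ T p ∪ emb2 m₁ m₂ n '' p.2.val)
        = (emb1 m₁ m₂ n '' q.1.val ∪ T q ∪ emb2 m₁ m₂ n '' q.2.val) :=
      congrArg Subtype.val hpq
    have h1 : p.1.val = q.1.val := by
      ext u
      rw [← mem_emb1_union m₁ m₂ n (hTrow p) u, hval, mem_emb1_union m₁ m₂ n (hTrow q) u]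
    have h2 : p.2.val = q.2.val := by
      ext u
      rw [← mem_emb2_union m₁ m₂ n (hTrow p) u, hval, mem_emb2_union m₁ m₂ n (hTrow q) u]
    exact Prod.ext (Subtype.ext h1) (Subtype.ext h2)
  · intro p
    exact ⟨T p, hTrow p, rfl⟩
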